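/- arXiv:1810.03562 — 5 statements merged into one kernel-verified Lean document; each statement's English description precedes it below -/
import Mathlib

section
/- Let M* be a perfect matching of G of minimum weight and let ε > 0. If a perfect matching M satisfies the ε-complementary-slackness condition with a price function p : V → ℝ, then w(M*) ≤ w(M) ≤ w(M*) + n·ε. -/
open Finset

/-- If `M*` is a minimum-weight perfect matching and a perfect matching `M`
satisfies the ε-complementary-slackness condition with prices `p : V → ℝ`, then
`w(M*) ≤ w(M) ≤ w(M*) + n·ε`. A perfect matching is modeled as a bijection `U ≃ V`
whose graph consists of edges of `E ⊆ U × V`; the neighbors of `u` correspond to the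
edges of `E` with first coordinate `u`. -/
theorem min_matching_eps_CS_bound
    {U V : Type*} [Fintype U] [Fintype V] [DecidableEq U] [DecidableEq V]
    (n : ℕ) (hU : Fintype.card U = n) (hV : Fintype.card V = n)
    (E : Finset (U × V)) (w : U × V → ℤ) (p : V → ℝ)
    (ε : ℝ) (hε : 0 < ε)
    (Mstar M : U ≃ V)
    (hMstar : ∀ u : U, (u, Mstar u) ∈ E)
    (hM : ∀ u : U, (u, M u) ∈ E)
    -- `M*` is of minimum weight among perfect matchings
    (hmin : ∀ M' : U ≃ V, (∀ u : U, (u, M' u) ∈ E) →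
      (∑ u : U, w (u, Mstar u)) ≤ ∑ u : U, w (u, M' u))
    -- ε-complementary slackness: for every matched edge `u (M u)`,
    -- `w'(u, M u) ≤ min_{z ∈ N(u)} w'(u, z) + ε`
    (hCS : ∀ u : U, (w (u, M u) : ℝ) - p (M u) ≤
      (E.filter (fun e => e.1 = u)).inf'
        ⟨(u, M u), Finset.mem_filter.mpr ⟨hM u, rfl⟩⟩
        (fun e => (w e : ℝ) - p e.2) + ε) :
    (∑ u : U, w (u, Mstar u)) ≤ (∑ u : U, w (u, M u)) ∧
    ((∑ u : U, w (u, M u)) : ℝ) ≤ ((∑ u : U, w (u, Mstar u)) : ℝ) + n * ε := by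
  refine ⟨hmin M hM, ?_⟩
  have key : ∀ u : U, (w (u, M u) : ℝ) - p (M u) ≤ (w (u, Mstar u) : ℝ) - p (Mstar u) + ε := by
    intro u
    refine (hCS u).trans (add_le_add ?_ le_rfl)
    have hmem : (u, Mstar u) ∈ E.filter (fun e => e.1 = u) :=
      Finset.mem_filter.mpr ⟨hMstar u, rfl⟩
    exact Finset.inf'_le (fun e => (w e : ℝ) - p e.2) hmem
  have hsum : ∑ u : U, ((w (u, M u) : ℝ) - p (M u)) ≤
      ∑ u : U, ((w (u, Mstar u) : ℝ) - p (Mstar u) + ε) :=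
    Finset.sum_le_sum fun u _ => key u
  have hp1 : ∑ u : U, p (M u) = ∑ v : V, p v := Fintype.sum_equiv M _ _ (fun _ => rfl)
  have hp2 : ∑ u : U, p (Mstar u) = ∑ v : V, p v := Fintype.sum_equiv Mstar _ _ (fun _ => rfl)
  have hcard : (Finset.univ : Finset U).card = n := by simpa using hU
  push_cast
  simp only [Finset.sum_sub_distrib, Finset.sum_add_distrib, Finset.sum_const, hcard,
    nsmul_eq_mul, hp1, hp2] at hsum
  push_cast at hsum
  linarith
end

section
/- If a perfect matching M of G and a price function p : V → ℝ satisfy the ε-complementary-slackness condition for some ε with 0 < ε < 1/n, then M is a perfect matching of minimum weight. -/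
open Finset

/-- If a perfect matching `M` and prices `p : V → ℝ` satisfy the
ε-complementary-slackness condition for some `0 < ε < 1/n`, then `M` is a perfect
matching of minimum weight. Perfect matchings are modeled as bijections `U ≃ V`
whose graphs consist of edges of `E ⊆ U × V`. -/
theorem eps_CS_small_eps_optimal
    {U V : Type*} [Fintype U] [Fintype V] [DecidableEq U] [DecidableEq V]
    (n : ℕ) (hU : Fintype.card U = n) (hV : Fintype.card V = n)
    (E : Finset (U × V)) (w : U × V → ℤ) (p : V → ℝ)
    (ε : ℝ) (hε : 0 < ε) (hεn : ε < 1 / (n : ℝ))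
    (M : U ≃ V)
    (hM : ∀ u : U, (u, M u) ∈ E)
    -- ε-complementary slackness
    (hCS : ∀ u : U, (w (u, M u) : ℝ) - p (M u) ≤
      (E.filter (fun e => e.1 = u)).inf'
        ⟨(u, M u), Finset.mem_filter.mpr ⟨hM u, rfl⟩⟩
        (fun e => (w e : ℝ) - p e.2) + ε) :
    ∀ M' : U ≃ V, (∀ u : U, (u, M' u) ∈ E) →
      (∑ u : U, w (u, M u)) ≤ ∑ u : U, w (u, M' u) := by
  intro M' hM'
  -- n > 0
  have hn : 0 < n := by
    rcases Nat.eq_zero_or_pos n with h | h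
    · exfalso; rw [h] at hεn; simp at hεn; linarith
    · exact h
  have hnε : (n : ℝ) * ε < 1 := by
    have hnpos : (0 : ℝ) < n := by exact_mod_cast hn
    rw [div_eq_mul_inv, one_mul] at hεn
    calc (n : ℝ) * ε < (n : ℝ) * ((n : ℝ)⁻¹) := by
          exact mul_lt_mul_of_pos_left hεn hnpos
      _ = 1 := mul_inv_cancel₀ (ne_of_gt hnpos)
  -- key pointwise inequality
  have key : ∀ u : U, (w (u, M u) : ℝ) - p (M u) ≤ (w (u, M' u) : ℝ) - p (M' u) + ε := by
    intro u
    have hmem : (u, M' u) ∈ E.filter (fun e => e.1 = u) :=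
      Finset.mem_filter.mpr ⟨hM' u, rfl⟩
    have hinf := Finset.inf'_le (s := E.filter (fun e => e.1 = u))
      (f := fun e => (w e : ℝ) - p e.2) hmem
    have := hCS u
    calc (w (u, M u) : ℝ) - p (M u)
        ≤ (E.filter (fun e => e.1 = u)).inf'
          ⟨(u, M u), Finset.mem_filter.mpr ⟨hM u, rfl⟩⟩
          (fun e => (w e : ℝ) - p e.2) + ε := this
      _ ≤ ((w (u, M' u) : ℝ) - p (M' u)) + ε := by
          exact add_le_add hinf (le_refl ε)
  have hsum : ∑ u : U, ((w (u, M u) : ℝ) - p (M u)) ≤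
      ∑ u : U, ((w (u, M' u) : ℝ) - p (M' u) + ε) := Finset.sum_le_sum (fun u _ => key u)
  have hp : ∑ u : U, p (M u) = ∑ u : U, p (M' u) := by
    rw [Equiv.sum_comp M p, Equiv.sum_comp M' p]
  have hcard : (Finset.univ : Finset U).card = n := hU
  have hsum2 : (∑ u : U, (w (u, M u) : ℝ)) ≤ (∑ u : U, (w (u, M' u) : ℝ)) + n * ε := by
    have h1 : ∑ u : U, ((w (u, M u) : ℝ) - p (M u)) =
        (∑ u : U, (w (u, M u) : ℝ)) - ∑ u : U, p (M u) := by
      rw [Finset.sum_sub_distrib]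
    have h2 : ∑ u : U, ((w (u, M' u) : ℝ) - p (M' u) + ε) =
        (∑ u : U, (w (u, M' u) : ℝ)) - (∑ u : U, p (M' u)) + n * ε := by
      rw [Finset.sum_add_distrib, Finset.sum_sub_distrib, Finset.sum_const, hcard,
        nsmul_eq_mul]
    rw [h1, h2, ← hp] at hsum
    linarith
  have hlt : ((∑ u : U, w (u, M u) : ℤ) : ℝ) < ((∑ u : U, w (u, M' u) : ℤ) : ℝ) + 1 := by
    push_cast
    calc (∑ u : U, (w (u, M u) : ℝ)) ≤ (∑ u : U, (w (u, M' u) : ℝ)) + n * ε := hsum2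
      _ < (∑ u : U, (w (u, M' u) : ℝ)) + 1 := by linarith
  have : (∑ u : U, w (u, M u)) < (∑ u : U, w (u, M' u)) + 1 := by exact_mod_cast hlt
  omega
end

section
/- If a perfect matching M of G satisfies the ε-complementary-slackness condition with a price function p : V → ℝ for some ε > 0, then for every perfect matching M' of G one has Σ_{uv ∈ M} (w(uv) − p(v)) ≤ Σ_{uv ∈ M'} (w(uv) − p(v)) + n·ε, and consequently w(M) ≤ w(M') + n·ε. -/
open Finset

/-- If a perfect matching `M` satisfies the ε-complementary-slackness
condition with prices `p : V → ℝ` for some `ε > 0`, then for every perfect matching `M'`,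
`Σ_{uv ∈ M} (w(uv) − p(v)) ≤ Σ_{uv ∈ M'} (w(uv) − p(v)) + n·ε`, and consequently
`w(M) ≤ w(M') + n·ε`. -/
theorem eps_CS_reduced_cost_bound
    {U V : Type*} [Fintype U] [Fintype V] [DecidableEq U] [DecidableEq V]
    (n : ℕ) (hU : Fintype.card U = n) (hV : Fintype.card V = n)
    (E : Finset (U × V)) (w : U × V → ℤ) (p : V → ℝ)
    (ε : ℝ) (hε : 0 < ε)
    (M : U ≃ V)
    (hM : ∀ u : U, (u, M u) ∈ E)
    -- ε-complementary slackness
    (hCS : ∀ u : U, (w (u, M u) : ℝ) - p (M u) ≤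
      (E.filter (fun e => e.1 = u)).inf'
        ⟨(u, M u), Finset.mem_filter.mpr ⟨hM u, rfl⟩⟩
        (fun e => (w e : ℝ) - p e.2) + ε) :
    ∀ M' : U ≃ V, (∀ u : U, (u, M' u) ∈ E) →
      (∑ u : U, ((w (u, M u) : ℝ) - p (M u))) ≤
        (∑ u : U, ((w (u, M' u) : ℝ) - p (M' u))) + n * ε ∧
      ((∑ u : U, w (u, M u)) : ℝ) ≤ ((∑ u : U, w (u, M' u)) : ℝ) + n * ε := by
  intro M' hM'
  have key : ∀ u : U, (w (u, M u) : ℝ) - p (M u) ≤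
      ((w (u, M' u) : ℝ) - p (M' u)) + ε := by
    intro u
    have h1 := hCS u
    have h2 : (E.filter (fun e => e.1 = u)).inf'
        ⟨(u, M u), Finset.mem_filter.mpr ⟨hM u, rfl⟩⟩
        (fun e => (w e : ℝ) - p e.2) ≤ (w (u, M' u) : ℝ) - p (M' u) := by
      apply Finset.inf'_le
      exact Finset.mem_filter.mpr ⟨hM' u, rfl⟩
    linarith
  have hsum : (∑ u : U, ((w (u, M u) : ℝ) - p (M u))) ≤
      (∑ u : U, ((w (u, M' u) : ℝ) - p (M' u))) + n * ε := by
    calc (∑ u : U, ((w (u, M u) : ℝ) - p (M u)))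
        ≤ ∑ u : U, (((w (u, M' u) : ℝ) - p (M' u)) + ε) :=
          Finset.sum_le_sum fun u _ => key u
      _ = (∑ u : U, ((w (u, M' u) : ℝ) - p (M' u))) + n * ε := by
          rw [Finset.sum_add_distrib, Finset.sum_const, Finset.card_univ, hU,
            nsmul_eq_mul]
  refine ⟨hsum, ?_⟩
  have hp : (∑ u : U, p (M u)) = ∑ u : U, p (M' u) := by
    rw [Equiv.sum_comp M p, Equiv.sum_comp M' p]
  have e1 : (∑ u : U, ((w (u, M u) : ℝ) - p (M u)))
      = ((∑ u : U, w (u, M u)) : ℝ) - ∑ u : U, p (M u) := by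
    push_cast [Finset.sum_sub_distrib]; ring
  have e2 : (∑ u : U, ((w (u, M' u) : ℝ) - p (M' u)))
      = ((∑ u : U, w (u, M' u)) : ℝ) - ∑ u : U, p (M' u) := by
    push_cast [Finset.sum_sub_distrib]; ring
  rw [e1, e2, hp] at hsum
  linarith
end

section
/- Let 0 < ε < 1/n and let f be a flow of the unit-capacity assignment network that is ε-optimal with respect to some price function p : U ⊔ V → ℝ, meaning: for every edge uv ∈ E with f(uv) = 1 one has −w(uv) + p(v) − p(u) ≥ −ε, and for every edge uv ∈ E with f(uv) = 0 one has w(uv) + p(u) − p(v) ≥ 0. Then f is a flow of minimum weight, i.e., w(f) ≤ w(g) for every flow g of the network. -/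
open Finset

/-- Let `0 < ε < 1/n` and let `f` be a flow of the unit-capacity
assignment network that is ε-optimal with respect to prices `p` on `U ⊔ V`
(modeled as `pU : U → ℝ` and `pV : V → ℝ`): every edge with `f = 1` satisfies
`−w(uv) + p(v) − p(u) ≥ −ε` and every edge with `f = 0` satisfies
`w(uv) + p(u) − p(v) ≥ 0`. Then `f` is a flow of minimum weight. -/
theorem eps_optimal_flow_min_weight
    {U V : Type*} [Fintype U] [Fintype V] [DecidableEq U] [DecidableEq V]
    (n : ℕ) (hU : Fintype.card U = n) (hV : Fintype.card V = n)
    (E : Finset (U × V)) (w : U × V → ℤ)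
    (ε : ℝ) (hε : 0 < ε) (hεn : ε < 1 / (n : ℝ))
    (f : U × V → ℤ) (hf01 : ∀ e ∈ E, 0 ≤ f e ∧ f e ≤ 1)
    -- `f` is a flow: every vertex has zero excess
    (hflowU : ∀ u : U, (1 : ℤ) + 0 - ∑ e ∈ E.filter (fun e => e.1 = u), f e = 0)
    (hflowV : ∀ v : V, (-1 : ℤ) + (∑ e ∈ E.filter (fun e => e.2 = v), f e) - 0 = 0)
    (pU : U → ℝ) (pV : V → ℝ)
    -- ε-optimality: reversed residual arcs have reduced cost ≥ −ε
    (hrev : ∀ e ∈ E, f e = 1 → -(w e : ℝ) + pV e.2 - pU e.1 ≥ -ε)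
    -- forward residual arcs have reduced cost ≥ 0
    (hfwd : ∀ e ∈ E, f e = 0 → (w e : ℝ) + pU e.1 - pV e.2 ≥ 0) :
    ∀ g : U × V → ℤ, (∀ e ∈ E, 0 ≤ g e ∧ g e ≤ 1) →
      (∀ u : U, (1 : ℤ) + 0 - ∑ e ∈ E.filter (fun e => e.1 = u), g e = 0) →
      (∀ v : V, (-1 : ℤ) + (∑ e ∈ E.filter (fun e => e.2 = v), g e) - 0 = 0) →
      (∑ e ∈ E, w e * f e) ≤ ∑ e ∈ E, w e * g e := by

  intro g hg01 hgU hgV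
  have hn : 0 < n := by
    rcases Nat.eq_zero_or_pos n with h | h
    · rw [h] at hεn; norm_num at hεn; linarith
    · exact h
  -- price sums vanish
  have hPU : ∑ e ∈ E, pU e.1 * ((g e : ℝ) - (f e : ℝ)) = 0 := by
    rw [← Finset.sum_fiberwise E (fun e => e.1)
      (fun e => pU e.1 * ((g e : ℝ) - (f e : ℝ)))]
    apply Finset.sum_eq_zero
    intro u _
    have h1 := hflowU u; have h2 := hgU u
    have h3 : ∑ e ∈ E.filter (fun e => e.1 = u), f e
        = ∑ e ∈ E.filter (fun e => e.1 = u), g e := by omega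
    calc ∑ e ∈ E.filter (fun e => e.1 = u), pU e.1 * ((g e : ℝ) - (f e : ℝ))
        = ∑ e ∈ E.filter (fun e => e.1 = u), pU u * ((g e : ℝ) - (f e : ℝ)) := by
          apply Finset.sum_congr rfl
          intro e he
          rw [(Finset.mem_filter.mp he).2]
      _ = pU u * ∑ e ∈ E.filter (fun e => e.1 = u), ((g e : ℝ) - (f e : ℝ)) := by
          rw [Finset.mul_sum]
      _ = 0 := by
          rw [Finset.sum_sub_distrib]
          push_cast
          rw [← Int.cast_sum, ← Int.cast_sum, h3]
          simp
  have hPV : ∑ e ∈ E, pV e.2 * ((g e : ℝ) - (f e : ℝ)) = 0 := by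
    rw [← Finset.sum_fiberwise E (fun e => e.2)
      (fun e => pV e.2 * ((g e : ℝ) - (f e : ℝ)))]
    apply Finset.sum_eq_zero
    intro v _
    have h1 := hflowV v; have h2 := hgV v
    have h3 : ∑ e ∈ E.filter (fun e => e.2 = v), f e
        = ∑ e ∈ E.filter (fun e => e.2 = v), g e := by omega
    calc ∑ e ∈ E.filter (fun e => e.2 = v), pV e.2 * ((g e : ℝ) - (f e : ℝ))
        = ∑ e ∈ E.filter (fun e => e.2 = v), pV v * ((g e : ℝ) - (f e : ℝ)) := by
          apply Finset.sum_congr rfl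
          intro e he
          rw [(Finset.mem_filter.mp he).2]
      _ = pV v * ∑ e ∈ E.filter (fun e => e.2 = v), ((g e : ℝ) - (f e : ℝ)) := by
          rw [Finset.mul_sum]
      _ = 0 := by
          rw [Finset.sum_sub_distrib]
          rw [← Int.cast_sum, ← Int.cast_sum, h3]
          simp
  -- total flow of f is n
  have hsumf : ∑ e ∈ E, f e = (n : ℤ) := by
    rw [← Finset.sum_fiberwise E (fun e => e.1) f]
    have : ∀ u : U, ∑ e ∈ E.filter (fun e => e.1 = u), f e = 1 := by
      intro u; have := hflowU u; omega
    rw [Finset.sum_congr rfl fun u _ => this u]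
    simp [hU]
  -- per-edge lower bound on reduced cost times flow difference
  have hedge : ∀ e ∈ E,
      ((w e : ℝ) + pU e.1 - pV e.2) * ((g e : ℝ) - (f e : ℝ)) ≥ -ε * (f e : ℝ) := by
    intro e he
    obtain ⟨hf0, hf1⟩ := hf01 e he
    obtain ⟨hg0, hg1⟩ := hg01 e he
    interval_cases hfe : f e
    · have hr := hfwd e he hfe
      push_cast
      nlinarith [mul_nonneg hr (by exact_mod_cast hg0 : (0:ℝ) ≤ (g e : ℝ))]
    · have hr := hrev e he hfe
      have hg0' : (0 : ℝ) ≤ (g e : ℝ) := by exact_mod_cast hg0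
      have hg1' : (g e : ℝ) ≤ 1 := by exact_mod_cast hg1
      push_cast
      nlinarith
  -- combine
  have hsum : ∑ e ∈ E, ((w e : ℝ) + pU e.1 - pV e.2) * ((g e : ℝ) - (f e : ℝ))
      ≥ ∑ e ∈ E, -ε * (f e : ℝ) := Finset.sum_le_sum hedge
  have hRHS : ∑ e ∈ E, -ε * (f e : ℝ) = -ε * (n : ℝ) := by
    rw [← Finset.mul_sum, ← Int.cast_sum, hsumf]
    push_cast; ring
  have hexpand : ∑ e ∈ E, ((w e : ℝ) + pU e.1 - pV e.2) * ((g e : ℝ) - (f e : ℝ))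
      = ∑ e ∈ E, (w e : ℝ) * ((g e : ℝ) - (f e : ℝ)) := by
    have : ∑ e ∈ E, ((w e : ℝ) + pU e.1 - pV e.2) * ((g e : ℝ) - (f e : ℝ))
        = ∑ e ∈ E, ((w e : ℝ) * ((g e : ℝ) - (f e : ℝ))
          + pU e.1 * ((g e : ℝ) - (f e : ℝ)) - pV e.2 * ((g e : ℝ) - (f e : ℝ))) := by
      apply Finset.sum_congr rfl; intro e _; ring
    rw [this, Finset.sum_sub_distrib, Finset.sum_add_distrib, hPU, hPV]
    ring
  have hD : (((∑ e ∈ E, w e * g e) - (∑ e ∈ E, w e * f e) : ℤ) : ℝ)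
      = ∑ e ∈ E, (w e : ℝ) * ((g e : ℝ) - (f e : ℝ)) := by
    push_cast
    rw [← Finset.sum_sub_distrib]
    apply Finset.sum_congr rfl; intro e _; ring
  have hεn' : -ε * (n : ℝ) > -1 := by
    have hn' : (0 : ℝ) < (n : ℝ) := by exact_mod_cast hn
    rw [lt_div_iff₀ hn'] at hεn
    nlinarith
  have hfin : (((∑ e ∈ E, w e * g e) - (∑ e ∈ E, w e * f e) : ℤ) : ℝ) > -1 := by
    rw [hD, ← hexpand]
    calc ∑ e ∈ E, ((w e : ℝ) + pU e.1 - pV e.2) * ((g e : ℝ) - (f e : ℝ))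
        ≥ -ε * (n : ℝ) := by rw [← hRHS]; exact hsum
      _ > -1 := hεn'
  have : ((∑ e ∈ E, w e * g e) - (∑ e ∈ E, w e * f e) : ℤ) > -1 := by
    exact_mod_cast hfin
  omega
end

section
/- Suppose a perfect matching M of G and prices p : V → ℝ satisfy the ε-complementary-slackness condition for some ε > 0, and extend p to U by setting p(u) = −min_{z ∈ N(u)} (w(uz) − p(z)) for each u ∈ U. Then the 0/1 flow f induced by M (f(uv) = 1 iff uv ∈ M) is ε-optimal with respect to the extended prices: for every uv ∈ M, −w(uv) + p(v) − p(u) ≥ −ε, and for every edge uv ∉ M, w(uv) + p(u) − p(v) ≥ 0. -/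
open Finset

/-- If a perfect matching `M` and prices `p : V → ℝ` satisfy the
ε-complementary-slackness condition and we extend the prices to `U` by
`p(u) = −min_{z ∈ N(u)} (w(uz) − p(z))`, then the 0/1 flow induced by `M` is ε-optimal
with respect to the extended prices: for every matched edge `−w(uv) + p(v) − p(u) ≥ −ε`,
and for every unmatched edge `w(uv) + p(u) − p(v) ≥ 0`. -/
theorem eps_CS_implies_eps_optimal_flow
    {U V : Type*} [Fintype U] [Fintype V] [DecidableEq U] [DecidableEq V]
    (n : ℕ) (hU : Fintype.card U = n) (hV : Fintype.card V = n)
    (E : Finset (U × V)) (w : U × V → ℤ) (p : V → ℝ)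
    (ε : ℝ) (hε : 0 < ε)
    (M : U ≃ V)
    (hM : ∀ u : U, (u, M u) ∈ E)
    -- ε-complementary slackness
    (hCS : ∀ u : U, (w (u, M u) : ℝ) - p (M u) ≤
      (E.filter (fun e => e.1 = u)).inf'
        ⟨(u, M u), Finset.mem_filter.mpr ⟨hM u, rfl⟩⟩
        (fun e => (w e : ℝ) - p e.2) + ε)
    -- extended prices on `U`
    (pU : U → ℝ)
    (hpU : ∀ u : U, pU u = -((E.filter (fun e => e.1 = u)).inf'
        ⟨(u, M u), Finset.mem_filter.mpr ⟨hM u, rfl⟩⟩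
        (fun e => (w e : ℝ) - p e.2))) :
    (∀ u : U, -(w (u, M u) : ℝ) + p (M u) - pU u ≥ -ε) ∧
    (∀ e ∈ E, e.2 ≠ M e.1 → (w e : ℝ) + pU e.1 - p e.2 ≥ 0) := by
  constructor
  · intro u
    have h := hCS u
    rw [hpU u]
    linarith
  · rintro ⟨u, v⟩ he hne
    have hmem : (u, v) ∈ E.filter (fun e => e.1 = u) := Finset.mem_filter.mpr ⟨he, rfl⟩
    have h := Finset.inf'_le
      (fun e => (w e : ℝ) - p e.2) hmem
    rw [hpU u]
    simp only at h ⊢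
    linarith
end
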